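/- Let $n, s$ be positive integers with $\gcd(s,n)=1$, let $F$ be a finite field with $2^n$ elements, let $d \ge 0$, and let $r_0, r_1, \dots, r_d \in F$ be coefficients that are not all zero. Then the polynomial $f(x) = \sum_{i=0}^{d} r_i x^{2^{si}}$ has at most $2^d$ zeros in $F$, i.e., the set $\{x \in F : \sum_{i=0}^{d} r_i x^{2^{si}} = 0\}$ has cardinality at most $2^d$. -/

import Mathlib

open Finset

private lemma fix_gcd_aux {F : Type*} [Field F] [CharP F 2] (x : F) :
    ∀ a b : ℕ, x ^ (2 ^ a) = x → x ^ (2 ^ b) = x → x ^ (2 ^ Nat.gcd a b) = x := by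
  haveI : Fact (Nat.Prime 2) := ⟨Nat.prime_two⟩
  have hinj : ∀ t : ℕ, Function.Injective (fun z : F => z ^ (2 ^ t)) := by
    intro t z1 z2 h
    have h1 : (z1 - z2) ^ (2 ^ t) = 0 := by
      rw [sub_pow_char_pow]
      simpa [sub_eq_zero] using h
    have h2 : z1 - z2 = 0 := pow_eq_zero_iff (pow_ne_zero t two_ne_zero) |>.mp h1
    exact sub_eq_zero.mp h2
  intro a b
  induction a, b using Nat.gcd.induction with
  | H0 b => intro _ h; simpa using h
  | H1 a b ha IH =>
    intro hm hn
    rw [Nat.gcd_rec]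
    apply IH _ hm
    have hq : ∀ q : ℕ, x ^ (2 ^ (a * q)) = x := by
      intro q
      induction q with
      | zero => simp
      | succ q ih =>
        have he : 2 ^ (a * (q + 1)) = 2 ^ (a * q) * 2 ^ a := by
          rw [← pow_add]; ring_nf
        rw [he, pow_mul, ih, hm]
    have key : (x ^ (2 ^ (b % a))) ^ (2 ^ (a * (b / a))) = x ^ (2 ^ (a * (b / a))) := by
      rw [← pow_mul, ← pow_add, Nat.mod_add_div b a, hn, hq]
    exact hinj (a * (b / a)) key

private lemma tele_aux {F : Type*} [CommRing F] (c b t : ℕ → F) (m : ℕ)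
    (h0 : c 0 = - b 0) (hrec : ∀ i < m + 1, c (i + 1) = b i - b (i + 1))
    (htop : b (m + 1) = 0) :
    ∑ i ∈ range (m + 2), c i * t i
      = ∑ i ∈ range (m + 1), b i * t (i + 1) - ∑ i ∈ range (m + 1), b i * t i := by
  rw [Finset.sum_range_succ' (fun i => c i * t i) (m + 1)]
  have hcongr : ∀ i ∈ range (m + 1),
      c (i + 1) * t (i + 1) = b i * t (i + 1) - b (i + 1) * t (i + 1) := by
    intro i hi
    rw [hrec i (mem_range.mp hi)]; ring
  rw [Finset.sum_congr rfl hcongr, Finset.sum_sub_distrib]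
  have h2 : ∑ i ∈ range (m + 1), b (i + 1) * t (i + 1)
      = ∑ i ∈ range (m + 2), b i * t i - b 0 * t 0 := by
    rw [Finset.sum_range_succ' (fun i => b i * t i) (m + 1)]; ring
  rw [h2, Finset.sum_range_succ (fun i => b i * t i) (m + 1), htop, h0]; ring

private lemma main_aux {F : Type*} [Field F] [Fintype F] [DecidableEq F] [CharP F 2]
    (s : ℕ) (hfix : ∀ x : F, x ^ (2 ^ s) = x → x = 0 ∨ x = 1) :
    ∀ (d : ℕ) (r : ℕ → F), (∃ i ≤ d, r i ≠ 0) →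
      (Finset.univ.filter
        (fun x : F => ∑ i ∈ range (d + 1), r i * x ^ (2 ^ (s * i)) = 0)).card ≤ 2 ^ d := by
  haveI : Fact (Nat.Prime 2) := ⟨Nat.prime_two⟩
  haveI : ExpChar F 2 := ExpChar.prime Nat.prime_two
  intro d
  induction d with
  | zero =>
    intro r hr
    obtain ⟨i, hi, hri⟩ := hr
    have hi0 : i = 0 := Nat.le_zero.mp hi
    subst hi0
    have hsub : (Finset.univ.filter
        (fun x : F => ∑ i ∈ range 1, r i * x ^ (2 ^ (s * i)) = 0)) ⊆ {0} := by
      intro x hx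
      simp only [Finset.mem_filter, Finset.sum_range_one, Nat.mul_zero, pow_zero,
        pow_one] at hx
      rcases mul_eq_zero.mp hx.2 with h | h
      · exact absurd h hri
      · simp [h]
    calc _ ≤ ({0} : Finset F).card := Finset.card_le_card hsub
      _ ≤ 2 ^ 0 := by simp
  | succ d IH =>
    intro r hr
    set V := Finset.univ.filter
      (fun x : F => ∑ i ∈ range (d + 1 + 1), r i * x ^ (2 ^ (s * i)) = 0) with hVdef
    by_cases hV : ∀ x ∈ V, x = 0
    · have hsub : V ⊆ {0} := by intro x hx; simp [hV x hx]
      calc V.card ≤ ({0} : Finset F).card := Finset.card_le_card hsub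
        _ ≤ 2 ^ (d + 1) := by simpa using Nat.one_le_two_pow
    · push_neg at hV
      obtain ⟨a, haV, ha0⟩ := hV
      have haV' : ∑ i ∈ range (d + 2), r i * a ^ (2 ^ (s * i)) = 0 := by
        have := (Finset.mem_filter.mp haV).2
        simpa using this
      set c : ℕ → F := fun i => r i * a ^ (2 ^ (s * i)) with hcdef
      set b : ℕ → F := fun i => ∑ j ∈ Finset.Ioc i (d + 1), c j with hbdef
      have hb_top : b (d + 1) = 0 := by simp [hbdef]
      have hb_rec : ∀ i < d + 1, c (i + 1) = b i - b (i + 1) := by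
        intro i hi
        have hIoc : Finset.Ioc i (d + 1) = (Finset.Ioc (i + 1) (d + 1)).cons (i + 1)
            Finset.left_notMem_Ioc := by
          rw [← Finset.Icc_eq_cons_Ioc (by omega), Finset.Icc_add_one_left_eq_Ioc]
        have hbi : b i = c (i + 1) + b (i + 1) := by
          simp only [hbdef]
          rw [hIoc, Finset.sum_cons]
        rw [hbi]; ring
      have hsum0 : c 0 + b 0 = 0 := by
        have hsplit : (range (d + 2)) = (Finset.Ioc 0 (d + 1)).cons 0
            Finset.left_notMem_Ioc := by
          rw [← Finset.Icc_eq_cons_Ioc (Nat.zero_le _), ← Finset.Ico_add_one_right_eq_Icc,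
            Finset.range_eq_Ico]; rfl
        have h := haV'
        rwa [hsplit, Finset.sum_cons] at h
      have h0 : c 0 = - b 0 := by linear_combination hsum0
      have hb_ne : ∃ i ≤ d, b i ≠ 0 := by
        by_contra hcon
        push_neg at hcon
        have hball : ∀ i ≤ d + 1, b i = 0 := by
          intro i hi
          rcases Nat.lt_or_ge i (d + 1) with h | h
          · exact hcon i (by omega)
          · have : i = d + 1 := by omega
            rw [this]; exact hb_top
        have hcall : ∀ i ≤ d + 1, c i = 0 := by
          intro i hi
          match i with
          | 0 => rw [h0, hball 0 (by omega), neg_zero]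
          | (j + 1) =>
            rw [hb_rec j (by omega), hball j (by omega), hball (j + 1) hi, sub_zero]
        obtain ⟨i, hi, hri⟩ := hr
        apply hri
        have hc := hcall i hi
        have hpow : a ^ (2 ^ (s * i)) ≠ 0 := pow_ne_zero _ ha0
        simp only [hcdef] at hc
        exact (mul_eq_zero.mp hc).resolve_right hpow
      have h2z : (2 : F) = 0 := CharTwo.two_eq_zero
      have tpow : ∀ (y : F) (i : ℕ), (y ^ (2 ^ s) + y) ^ (2 ^ (s * i))
          = y ^ (2 ^ (s * (i + 1))) + y ^ (2 ^ (s * i)) := by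
        intro y i
        rw [add_pow_char_pow, ← pow_mul, ← pow_add]
        congr 2
        ring
      have hkey : ∀ y : F, ∑ i ∈ range (d + 2), r i * (a * y) ^ (2 ^ (s * i))
          = ∑ i ∈ range (d + 1), b i * ((y ^ (2 ^ s) + y) ^ (2 ^ (s * i))) := by
        intro y
        have hL : ∑ i ∈ range (d + 2), r i * (a * y) ^ (2 ^ (s * i))
            = ∑ i ∈ range (d + 2), c i * y ^ (2 ^ (s * i)) := by
          refine Finset.sum_congr rfl fun i _ => ?_
          simp only [hcdef, mul_pow]; ring
        have hR : ∑ i ∈ range (d + 1), b i * ((y ^ (2 ^ s) + y) ^ (2 ^ (s * i)))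
            = ∑ i ∈ range (d + 1), b i * y ^ (2 ^ (s * (i + 1)))
              + ∑ i ∈ range (d + 1), b i * y ^ (2 ^ (s * i)) := by
          rw [← Finset.sum_add_distrib]
          refine Finset.sum_congr rfl fun i _ => ?_
          rw [tpow]; ring
        rw [hL, hR]
        have ht := tele_aux c b (fun i => y ^ (2 ^ (s * i))) d h0 hb_rec hb_top
        rw [CharTwo.sub_eq_add] at ht
        exact ht
      set K := Finset.univ.filter
        (fun z : F => ∑ i ∈ range (d + 1), b i * z ^ (2 ^ (s * i)) = 0) with hKdef
      have hK : K.card ≤ 2 ^ d := IH b hb_ne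
      set W := Finset.univ.filter
        (fun y : F => ∑ i ∈ range (d + 1),
          b i * ((y ^ (2 ^ s) + y) ^ (2 ^ (s * i))) = 0) with hWdef
      have hVW : V = W.image (fun y => a * y) := by
        ext x
        simp only [hVdef, hWdef, Finset.mem_filter, Finset.mem_image, Finset.mem_univ,
          true_and]
        constructor
        · intro hx
          refine ⟨a⁻¹ * x, ?_, by field_simp⟩
          have hk := hkey (a⁻¹ * x)
          rw [show a * (a⁻¹ * x) = x by field_simp] at hk
          rw [← hk]
          simpa using hx
        · rintro ⟨y, hyW, rfl⟩
          have hk := hkey y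
          rw [hyW] at hk
          simpa using hk
      have hcardVW : V.card = W.card := by
        rw [hVW]
        exact Finset.card_image_of_injective _ (mul_right_injective₀ ha0)
      have hfib : ∀ z ∈ W.image (fun y : F => y ^ (2 ^ s) + y),
          (W.filter (fun y => y ^ (2 ^ s) + y = z)).card ≤ 2 := by
        intro z hz
        obtain ⟨y0, hy0W, hy0z⟩ := Finset.mem_image.mp hz
        have hsub : W.filter (fun y => y ^ (2 ^ s) + y = z) ⊆ {y0, y0 + 1} := by
          intro y hy
          have hyz : y ^ (2 ^ s) + y = z := (Finset.mem_filter.mp hy).2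
          have heq : y ^ (2 ^ s) + y = y0 ^ (2 ^ s) + y0 := by rw [hyz, ← hy0z]
          have hfp : (y + y0) ^ (2 ^ s) = y + y0 := by
            rw [add_pow_char_pow]
            linear_combination heq + (y0 ^ (2 ^ s) - y) * h2z
          simp only [Finset.mem_insert, Finset.mem_singleton]
          rcases hfix _ hfp with h | h
          · left; linear_combination h - y0 * h2z
          · right; linear_combination h - y0 * h2z
        calc (W.filter (fun y => y ^ (2 ^ s) + y = z)).card
            ≤ ({y0, y0 + 1} : Finset F).card := Finset.card_le_card hsub
          _ ≤ 2 := Finset.card_le_two.trans_eq rfl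
      have hWcard : W.card ≤ 2 * (W.image (fun y : F => y ^ (2 ^ s) + y)).card :=
        Finset.card_le_mul_card_image W 2 hfib
      have himg : W.image (fun y : F => y ^ (2 ^ s) + y) ⊆ K := by
        intro z hz
        obtain ⟨y, hyW, rfl⟩ := Finset.mem_image.mp hz
        simp only [hWdef, Finset.mem_filter, Finset.mem_univ, true_and] at hyW
        simp only [hKdef, Finset.mem_filter, Finset.mem_univ, true_and]
        exact hyW
      calc V.card = W.card := hcardVW
        _ ≤ 2 * (W.image (fun y : F => y ^ (2 ^ s) + y)).card := hWcard
        _ ≤ 2 * K.card := by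
            exact Nat.mul_le_mul_left 2 (Finset.card_le_card himg)
        _ ≤ 2 * 2 ^ d := Nat.mul_le_mul_left 2 hK
        _ = 2 ^ (d + 1) := by ring

theorem stmt_2 (n s : ℕ) (hn : 0 < n) (hs : 0 < s) (hgcd : Nat.gcd s n = 1)
    (F : Type*) [Field F] [Fintype F] (hF : Fintype.card F = 2 ^ n)
    (d : ℕ) (r : ℕ → F) (hr : ∃ i ≤ d, r i ≠ 0) :
    {x : F | ∑ i ∈ Finset.range (d + 1), r i * x ^ (2 ^ (s * i)) = 0}.ncard ≤ 2 ^ d := by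
  classical
  haveI : CharP F (ringChar F) := ringChar.charP F
  obtain ⟨m, hm_prime, hm_card⟩ := FiniteField.card F (ringChar F)
  have hdvd : ringChar F ∣ 2 ^ n := by
    have h1 : ringChar F ∣ Fintype.card F := by
      rw [hm_card]; exact dvd_pow_self _ m.pos.ne'
    rwa [hF] at h1
  have hchar2 : ringChar F = 2 :=
    (Nat.prime_dvd_prime_iff_eq hm_prime Nat.prime_two).mp (hm_prime.dvd_of_dvd_pow hdvd)
  haveI hC2 : CharP F 2 := hchar2 ▸ ringChar.charP F
  have hfix : ∀ x : F, x ^ (2 ^ s) = x → x = 0 ∨ x = 1 := by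
    intro x hx
    by_cases hx0 : x = 0
    · exact Or.inl hx0
    · right
      have hn' : x ^ (2 ^ n) = x := by rw [← hF]; exact FiniteField.pow_card x
      have hg := fix_gcd_aux x s n hx hn'
      rw [hgcd, pow_one] at hg
      have hxx : x * x = x * 1 := by rw [mul_one, ← sq]; exact hg
      exact mul_left_cancel₀ hx0 hxx
  rw [Set.ncard_eq_toFinset_card', Set.toFinset_setOf]
  exact main_aux s hfix d r hr
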